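/- Let I be a set, let 𝓕 be a family of finite subsets of I, and let A = {χ_F : F ∈ 𝓕} ⊆ c₀(I), where χ_F denotes the characteristic function of F. Suppose there exist a real Hilbert space H, an orthonormal family (h_x)_{x∈A} in H, and a bounded linear operator T : H → c₀(I) with T(h_x) = x for every x ∈ A. Then A is uniformly weakly null in c₀(I). -/

import Mathlib

open scoped Classical

open ZeroAtInfty

/-- Let `𝓕` be a family of finite subsets of `I` (with `I` discrete) and
`A = {χ_F : F ∈ 𝓕} ⊆ c₀(I)`. If there are a real Hilbert space `H`, an orthonormal family
`(h_x)_{x ∈ A}` in `H` and a bounded linear operator `T : H → c₀(I)` with `T(h_x) = x` for all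
`x ∈ A`, then `A` is uniformly weakly null in `c₀(I)`. -/
theorem statement16 {I : Type*} [TopologicalSpace I] [DiscreteTopology I]
    (F : Set (Finset I)) (A : Set C₀(I, ℝ))
    (hA : A = {x : C₀(I, ℝ) | ∃ S ∈ F, ∀ i, x i = if i ∈ S then 1 else 0})
    (H : Type*) [NormedAddCommGroup H] [InnerProductSpace ℝ H] [CompleteSpace H]
    (h : A → H) (hON : Orthonormal ℝ h)
    (T : H →L[ℝ] C₀(I, ℝ)) (hT : ∀ x : A, T (h x) = (x : C₀(I, ℝ))) :
    ∀ ε : ℝ, 0 < ε → ∃ N : ℕ, ∀ f : C₀(I, ℝ) →L[ℝ] ℝ, ‖f‖ ≤ 1 →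
      {x ∈ A | ε < |f x|}.encard ≤ (N : ℕ∞) := by
  intro ε hε
  refine ⟨⌈‖T‖ ^ 2 / ε ^ 2⌉₊, fun f hf => ?_⟩
  by_contra hcon
  push_neg at hcon
  set N := ⌈‖T‖ ^ 2 / ε ^ 2⌉₊ with hN
  -- extract a subset of size N+1
  obtain ⟨t, hts, htc⟩ := Set.exists_subset_encard_eq
    (show ((N + 1 : ℕ) : ℕ∞) ≤ {x ∈ A | ε < |f x|}.encard by
      exact_mod_cast Order.add_one_le_of_lt hcon)
  have htfin : t.Finite := Set.finite_of_encard_le_coe htc.le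
  haveI : Fintype t := htfin.fintype
  have hcard : Fintype.card t = N + 1 := by
    have := htc
    rw [htfin.encard_eq_coe_toFinset_card] at this
    have : htfin.toFinset.card = N + 1 := by exact_mod_cast this
    simpa [Set.Finite.card_toFinset] using this
  -- Riesz representation of f ∘ T
  set g := (InnerProductSpace.toDual ℝ H).symm (f.comp T) with hg
  have hgnorm : ‖g‖ ≤ ‖T‖ := by
    have : ‖g‖ = ‖f.comp T‖ := (InnerProductSpace.toDual ℝ H).symm.norm_map _
    rw [this]
    calc ‖f.comp T‖ ≤ ‖f‖ * ‖T‖ := ContinuousLinearMap.opNorm_comp_le _ _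
      _ ≤ 1 * ‖T‖ := by gcongr
      _ = ‖T‖ := one_mul _
  have hginner : ∀ y : H, (inner ℝ g y : ℝ) = f (T y) := by
    intro y
    have : InnerProductSpace.toDual ℝ H g = f.comp T :=
      (InnerProductSpace.toDual ℝ H).apply_symm_apply _
    have := DFunLike.congr_fun this y
    simpa [InnerProductSpace.toDual_apply_apply] using this
  -- inclusion into A
  have hsubA : ∀ y : t, (y : C₀(I, ℝ)) ∈ A := fun y => (hts y.2).1
  set incl : t → A := fun y => ⟨(y : C₀(I, ℝ)), hsubA y⟩ with hincl
  have hinclinj : Function.Injective incl := fun a b hab =>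
    Subtype.ext (Subtype.mk_eq_mk.mp hab)
  have hON' : Orthonormal ℝ (h ∘ incl) := hON.comp incl hinclinj
  -- Bessel
  have hbessel : ∑ y : t, ‖(inner ℝ ((h ∘ incl) y) g : ℝ)‖ ^ 2 ≤ ‖g‖ ^ 2 :=
    hON'.sum_inner_products_le g
  have hterm : ∀ y : t, ε ^ 2 ≤ ‖(inner ℝ ((h ∘ incl) y) g : ℝ)‖ ^ 2 := by
    intro y
    have h1 : (inner ℝ ((h ∘ incl) y) g : ℝ) = f ((y : C₀(I, ℝ))) := by
      rw [Function.comp_apply, real_inner_comm, hginner, hT (incl y)]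
    have h2 : ε < |f ((y : C₀(I, ℝ)))| := (hts y.2).2
    rw [h1, Real.norm_eq_abs]
    exact pow_le_pow_left₀ hε.le h2.le 2 |>.trans_eq rfl
  have hsum : (N + 1 : ℝ) * ε ^ 2 ≤ ‖g‖ ^ 2 := by
    calc (N + 1 : ℝ) * ε ^ 2 = ∑ _y : t, ε ^ 2 := by
          rw [Finset.sum_const, Finset.card_univ, hcard]; push_cast; ring
      _ ≤ ∑ y : t, ‖(inner ℝ ((h ∘ incl) y) g : ℝ)‖ ^ 2 :=
          Finset.sum_le_sum fun y _ => hterm y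
      _ ≤ ‖g‖ ^ 2 := hbessel
  have hTg : ‖g‖ ^ 2 ≤ ‖T‖ ^ 2 := by
    have := norm_nonneg g
    gcongr
  have hNle : ‖T‖ ^ 2 / ε ^ 2 ≤ (N : ℝ) := Nat.le_ceil _
  have hε2 : (0 : ℝ) < ε ^ 2 := by positivity
  have : ‖T‖ ^ 2 ≤ N * ε ^ 2 := by
    rw [div_le_iff₀ hε2] at hNle; linarith
  nlinarith [hsum, hTg]
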